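/- Let n ≥ 2, ℓ > 0, κ₀ > 0 with 2ℓκ₀ < 1 admissible range, let Q ⊂ ℝ^{n−1} be a bounded measurable set, and let κ₁, …, κ_{n−1} : Q → ℝ be measurable with |κ_j(s)| ≤ κ₀ for all s ∈ Q and all j. Set H₀(s) := Σ_{j=1}^{n−1} κ_j(s) and, for ε > 0, J(s,z) := Π_{j=1}^{n−1} (1 + εzκ_j(s)). Let W : ℝ → ℝ be C¹ with W(0) = 0, and let u : ℝ^{n−1}×ℝ → ℝ be C² with u(s, ±ℓ) = 0 and (∂u/∂z)(s, ±ℓ) = 0 for every s ∈ Q. Then there is a constant C depending only on n and κ₀ such that for every ε with 0 < ε < 1/(2ℓκ₀), | (1/ε)·∫_{Q×(−ℓ,ℓ)} H₀(s)·(∂u/∂z)·(−∂²u/∂z² + W'(u))·J(s,z) ds dz | ≤ C·∫_{Q×(−ℓ,ℓ)} | (1/2)·(∂u/∂z)² − W(u) | ds dz. -/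

import Mathlib

open MeasureTheory

/-- Normal partial derivative `∂u/∂z` in the product coordinates `(s, z)`. -/
noncomputable def pdz {m : ℕ} (u : (Fin m → ℝ) × ℝ → ℝ) (x : (Fin m → ℝ) × ℝ) : ℝ :=
  fderiv ℝ u x (0, 1)

lemma pdz_contDiff {m : ℕ} {u : (Fin m → ℝ) × ℝ → ℝ} (hu : ContDiff ℝ 2 u) :
    ContDiff ℝ 1 (pdz u) :=
  (hu.fderiv_right (by norm_num)).clm_apply contDiff_const

lemma pdz_pdz_continuous {m : ℕ} {u : (Fin m → ℝ) × ℝ → ℝ} (hu : ContDiff ℝ 2 u) :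
    Continuous (pdz (fun y => pdz u y)) := by
  have h : ContDiff ℝ 0 (pdz (pdz u)) :=
    ((pdz_contDiff hu).fderiv_right (by norm_num)).clm_apply contDiff_const
  exact h.continuous

lemma hasDerivAt_slice {m : ℕ} {f : (Fin m → ℝ) × ℝ → ℝ} {s : Fin m → ℝ} {z : ℝ}
    (hf : DifferentiableAt ℝ f (s, z)) :
    HasDerivAt (fun t => f (s, t)) (pdz f (s, z)) z := by
  have h1 : HasDerivAt (fun t : ℝ => ((s : Fin m → ℝ), t)) (0, 1) z :=
    (hasDerivAt_const z s).prodMk (hasDerivAt_id z)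
  exact hf.hasFDerivAt.comp_hasDerivAt z h1

lemma inner_bound {m : ℕ} {u : (Fin m → ℝ) × ℝ → ℝ} (hu : ContDiff ℝ 2 u)
    {W : ℝ → ℝ} (hW : ContDiff ℝ 1 W) (hW0 : W 0 = 0)
    {ℓ κ₀ ε : ℝ} (hℓ : 0 < ℓ) (hκ₀ : 0 < κ₀) (hε0 : 0 < ε) (hεb : ε * ℓ * κ₀ ≤ 1 / 2)
    (κ : Fin m → (Fin m → ℝ) → ℝ) {s : Fin m → ℝ}
    (hκb : ∀ j, |κ j s| ≤ κ₀)
    (hbc1 : u (s, -ℓ) = 0) (hbc2 : u (s, ℓ) = 0)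
    (hbc3 : pdz u (s, -ℓ) = 0) (hbc4 : pdz u (s, ℓ) = 0) :
    |ε⁻¹ * ∫ z in Set.Ioo (-ℓ) ℓ,
        (∑ j, κ j s) * pdz u (s, z) * (-(pdz (fun y => pdz u y) (s, z)) + deriv W (u (s, z)))
          * (∏ j, (1 + ε * z * κ j s))|
      ≤ ((m : ℝ) ^ 2 * κ₀ ^ 2 * 2 ^ m) *
          ∫ z in Set.Ioo (-ℓ) ℓ, |(1 / 2) * (pdz u (s, z)) ^ 2 - W (u (s, z))| := by
  have hle : -ℓ ≤ ℓ := by linarith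
  set g : ℝ → ℝ := fun t => pdz u (s, t) with hg_def
  set dd : ℝ → ℝ := fun t => pdz (fun y => pdz u y) (s, t) with hdd_def
  set h : ℝ → ℝ := fun t => u (s, t) with hh_def
  set Fz : ℝ → ℝ := fun t => (1 / 2) * (g t) ^ 2 - W (h t) with hFz_def
  set Fd : ℝ → ℝ := fun t => (1 / 2) * (2 * g t ^ 1 * dd t) - deriv W (h t) * g t with hFd_def
  set Jf : ℝ → ℝ := fun t => ∏ j, (1 + ε * t * κ j s) with hJf_def
  set Jd : ℝ → ℝ :=
    fun t => ∑ j, (∏ i ∈ Finset.univ.erase j, (1 + ε * t * κ i s)) • (ε * κ j s) with hJd_def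
  -- continuity
  have hgc : Continuous g := (pdz_contDiff hu).continuous.comp (Continuous.prodMk_right s)
  have hddc : Continuous dd := (pdz_pdz_continuous hu).comp (Continuous.prodMk_right s)
  have hhc : Continuous h := hu.continuous.comp (Continuous.prodMk_right s)
  have hW'c : Continuous (deriv W) := hW.continuous_deriv le_rfl
  have hFzc : Continuous Fz :=
    (continuous_const.mul (hgc.pow 2)).sub (hW.continuous.comp hhc)
  have hFdc : Continuous Fd :=
    (continuous_const.mul ((continuous_const.mul (hgc.pow 1)).mul hddc)).sub
      ((hW'c.comp hhc).mul hgc)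
  have hJdc : Continuous Jd := by
    apply continuous_finset_sum
    intro j _
    exact (continuous_finset_prod _ fun i _ =>
      continuous_const.add ((continuous_const.mul continuous_id).mul continuous_const)).smul
      continuous_const
  -- derivatives
  have hWd : ∀ t : ℝ, HasDerivAt W (deriv W t) t := fun t =>
    ((hW.differentiable (by norm_num)) t).hasDerivAt
  have hgD : ∀ t, HasDerivAt g (dd t) t := fun t =>
    hasDerivAt_slice (((pdz_contDiff hu).differentiable (by norm_num)) (s, t))
  have hhD : ∀ t, HasDerivAt h (g t) t := fun t =>
    hasDerivAt_slice ((hu.differentiable (by norm_num)) (s, t))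
  have hFD : ∀ t, HasDerivAt Fz (Fd t) t := by
    intro t
    have h1 : HasDerivAt (fun t => (1 / 2 : ℝ) * (g t) ^ 2)
        ((1 / 2) * (2 * g t ^ 1 * dd t)) t := ((hgD t).pow 2).const_mul (1 / 2)
    have h2 : HasDerivAt (W ∘ h) (deriv W (h t) * g t) t :=
      (hWd (h t)).comp t (hhD t)
    exact h1.sub h2
  have hJD : ∀ t, HasDerivAt Jf (Jd t) t := by
    intro t
    exact HasDerivAt.fun_finsetProd fun j _ => by
      simpa only [id, mul_one] using ((((hasDerivAt_id t).const_mul ε).mul_const (κ j s)).const_add 1)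
  -- boundary values
  have hFz1 : Fz (-ℓ) = 0 := by simp [hFz_def, hg_def, hh_def, hbc1, hbc3, hW0]
  have hFz2 : Fz ℓ = 0 := by simp [hFz_def, hg_def, hh_def, hbc2, hbc4, hW0]
  -- integration by parts
  have ibp : ∫ t in (-ℓ)..ℓ, Jf t * Fd t
      = Jf ℓ * Fz ℓ - Jf (-ℓ) * Fz (-ℓ) - ∫ t in (-ℓ)..ℓ, Jd t * Fz t :=
    intervalIntegral.integral_mul_deriv_eq_deriv_mul (fun t _ => hJD t) (fun t _ => hFD t)
      (hJdc.intervalIntegrable _ _) (hFdc.intervalIntegrable _ _)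
  have key : (∫ z in Set.Ioo (-ℓ) ℓ,
        (∑ j, κ j s) * g z * (-(dd z) + deriv W (h z)) * Jf z)
      = (∑ j, κ j s) * ∫ t in (-ℓ)..ℓ, Jd t * Fz t := by
    rw [← integral_Ioc_eq_integral_Ioo, ← intervalIntegral.integral_of_le hle]
    have e1 : ∀ t, (∑ j, κ j s) * g t * (-(dd t) + deriv W (h t)) * Jf t
        = (∑ j, κ j s) * (-(Jf t * Fd t)) := by
      intro t; simp only [hFd_def]; ring
    rw [intervalIntegral.integral_congr (g := fun t => (∑ j, κ j s) * (-(Jf t * Fd t)))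
      (fun t _ => e1 t)]
    rw [intervalIntegral.integral_const_mul, intervalIntegral.integral_neg, ibp, hFz1, hFz2]
    ring
  -- bounds
  have hfac : ∀ i : Fin m, ∀ t ∈ Set.Icc (-ℓ) ℓ, |1 + ε * t * κ i s| ≤ 2 := by
    intro i t ht
    have htl : |t| ≤ ℓ := abs_le.2 ⟨ht.1, ht.2⟩
    have h1 : |ε * t * κ i s| ≤ ε * ℓ * κ₀ := by
      rw [abs_mul, abs_mul, abs_of_pos hε0]
      gcongr
      exact hκb i
    calc |1 + ε * t * κ i s| ≤ |(1 : ℝ)| + |ε * t * κ i s| := abs_add_le _ _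
      _ ≤ 1 + 1 / 2 := by rw [abs_one]; linarith
      _ ≤ 2 := by norm_num
  have hJdb : ∀ t ∈ Set.Icc (-ℓ) ℓ, |Jd t| ≤ ε * ((m : ℝ) * κ₀ * 2 ^ m) := by
    intro t ht
    have hterm : ∀ j : Fin m,
        |(∏ i ∈ Finset.univ.erase j, (1 + ε * t * κ i s)) • (ε * κ j s)|
          ≤ 2 ^ m * (ε * κ₀) := by
      intro j
      rw [smul_eq_mul, abs_mul]
      have hp : |∏ i ∈ Finset.univ.erase j, (1 + ε * t * κ i s)| ≤ 2 ^ m := by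
        rw [Finset.abs_prod]
        calc ∏ i ∈ Finset.univ.erase j, |1 + ε * t * κ i s|
            ≤ ∏ _i ∈ Finset.univ.erase j, (2 : ℝ) :=
              Finset.prod_le_prod (fun i _ => abs_nonneg _) (fun i _ => hfac i t ht)
          _ = 2 ^ (Finset.univ.erase j).card := Finset.prod_const 2
          _ ≤ 2 ^ m := by
              apply pow_le_pow_right₀ (by norm_num)
              calc (Finset.univ.erase j).card ≤ (Finset.univ : Finset (Fin m)).card :=
                    Finset.card_erase_le
                _ = m := by simp
      have hq : |ε * κ j s| ≤ ε * κ₀ := by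
        rw [abs_mul, abs_of_pos hε0]
        exact mul_le_mul_of_nonneg_left (hκb j) hε0.le
      exact mul_le_mul hp hq (abs_nonneg _) (by positivity)
    calc |Jd t| ≤ ∑ j, |(∏ i ∈ Finset.univ.erase j, (1 + ε * t * κ i s)) • (ε * κ j s)| :=
          Finset.abs_sum_le_sum_abs _ _
      _ ≤ ∑ _j : Fin m, 2 ^ m * (ε * κ₀) := Finset.sum_le_sum fun j _ => hterm j
      _ = (m : ℝ) * (2 ^ m * (ε * κ₀)) := by simp [Finset.sum_const, mul_comm]
      _ = ε * ((m : ℝ) * κ₀ * 2 ^ m) := by ring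
  have hHb : |∑ j, κ j s| ≤ (m : ℝ) * κ₀ := by
    calc |∑ j, κ j s| ≤ ∑ j, |κ j s| := Finset.abs_sum_le_sum_abs _ _
      _ ≤ ∑ _j : Fin m, κ₀ := Finset.sum_le_sum fun j _ => hκb j
      _ = (m : ℝ) * κ₀ := by simp [Finset.sum_const, mul_comm]
  set I0 : ℝ := ∫ t in (-ℓ)..ℓ, |Fz t| with hI0_def
  have hI0nn : 0 ≤ I0 := intervalIntegral.integral_nonneg hle fun t _ => abs_nonneg _
  have hA : |∫ t in (-ℓ)..ℓ, Jd t * Fz t| ≤ ε * ((m : ℝ) * κ₀ * 2 ^ m) * I0 := by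
    calc |∫ t in (-ℓ)..ℓ, Jd t * Fz t| ≤ ∫ t in (-ℓ)..ℓ, |Jd t * Fz t| :=
          intervalIntegral.abs_integral_le_integral_abs hle
      _ ≤ ∫ t in (-ℓ)..ℓ, ε * ((m : ℝ) * κ₀ * 2 ^ m) * |Fz t| := by
          apply intervalIntegral.integral_mono_on hle
            ((hJdc.mul hFzc).abs.intervalIntegrable _ _)
            ((continuous_const.mul hFzc.abs).intervalIntegrable _ _)
          intro t ht
          simp only [Pi.mul_apply]
          rw [abs_mul]
          exact mul_le_mul_of_nonneg_right (hJdb t ht) (abs_nonneg _)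
      _ = ε * ((m : ℝ) * κ₀ * 2 ^ m) * I0 := intervalIntegral.integral_const_mul _ _
  have hRHS : (∫ z in Set.Ioo (-ℓ) ℓ, |(1 / 2) * (pdz u (s, z)) ^ 2 - W (u (s, z))|) = I0 := by
    rw [hI0_def, intervalIntegral.integral_of_le hle, integral_Ioc_eq_integral_Ioo]
  rw [key, hRHS]
  calc |ε⁻¹ * ((∑ j, κ j s) * ∫ t in (-ℓ)..ℓ, Jd t * Fz t)|
      = ε⁻¹ * (|∑ j, κ j s| * |∫ t in (-ℓ)..ℓ, Jd t * Fz t|) := by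
        rw [abs_mul, abs_mul, abs_of_pos (inv_pos.2 hε0)]
    _ ≤ ε⁻¹ * (((m : ℝ) * κ₀) * (ε * ((m : ℝ) * κ₀ * 2 ^ m) * I0)) := by
        apply mul_le_mul_of_nonneg_left _ (inv_pos.2 hε0).le
        exact mul_le_mul hHb hA (abs_nonneg _) (by positivity)
    _ = (m : ℝ) ^ 2 * κ₀ ^ 2 * 2 ^ m * I0 := by
        field_simp


/-- bound for the curvature cross term `I₃` by the equipartition defect. -/
theorem stmt_9 (n : ℕ) (hn : 2 ≤ n) (ℓ κ₀ : ℝ) (hℓ : 0 < ℓ) (hκ₀ : 0 < κ₀)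
    (hadm : 2 * ℓ * κ₀ < 1)
    (Q : Set (Fin (n - 1) → ℝ)) (hQm : MeasurableSet Q) (hQb : Bornology.IsBounded Q)
    (κ : Fin (n - 1) → (Fin (n - 1) → ℝ) → ℝ) (hκm : ∀ j, Measurable (κ j))
    (hκb : ∀ j, ∀ s ∈ Q, |κ j s| ≤ κ₀)
    (W : ℝ → ℝ) (hW : ContDiff ℝ 1 W) (hW0 : W 0 = 0)
    (u : (Fin (n - 1) → ℝ) × ℝ → ℝ) (hu : ContDiff ℝ 2 u)
    (hbc : ∀ s ∈ Q, u (s, -ℓ) = 0 ∧ u (s, ℓ) = 0 ∧ pdz u (s, -ℓ) = 0 ∧ pdz u (s, ℓ) = 0) :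
    ∃ C : ℝ, 0 < C ∧ ∀ ε : ℝ, 0 < ε → ε < 1 / (2 * ℓ * κ₀) →
      |ε⁻¹ * ∫ x in Q ×ˢ Set.Ioo (-ℓ) ℓ,
          (∑ j, κ j x.1) * pdz u x * (-(pdz (fun y => pdz u y) x) + deriv W (u x))
            * (∏ j, (1 + ε * x.2 * κ j x.1))|
        ≤ C * ∫ x in Q ×ˢ Set.Ioo (-ℓ) ℓ, |(1 / 2) * (pdz u x) ^ 2 - W (u x)| := by
  set C₀ : ℝ := ((n - 1 : ℕ) : ℝ) ^ 2 * κ₀ ^ 2 * 2 ^ (n - 1) with hC0_def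
  have hC0nn : 0 ≤ C₀ := by positivity
  refine ⟨C₀ + 1, by positivity, fun ε hε0 hε1 => ?_⟩
  have h2lk : (0 : ℝ) < 2 * ℓ * κ₀ := by positivity
  have hεb : ε * ℓ * κ₀ ≤ 1 / 2 := by
    have := (lt_div_iff₀ h2lk).mp hε1
    nlinarith
  -- the integrands
  set f₀ : (Fin (n - 1) → ℝ) × ℝ → ℝ := fun x =>
    (∑ j, κ j x.1) * pdz u x * (-(pdz (fun y => pdz u y) x) + deriv W (u x))
      * (∏ j, (1 + ε * x.2 * κ j x.1)) with hf₀_def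
  set Fa : (Fin (n - 1) → ℝ) × ℝ → ℝ := fun x => |(1 / 2) * (pdz u x) ^ 2 - W (u x)| with hFa_def
  have hcd : Continuous (pdz u) := (pdz_contDiff hu).continuous
  have hcdd : Continuous (pdz (fun y => pdz u y)) := pdz_pdz_continuous hu
  have hW'c : Continuous (deriv W) := hW.continuous_deriv le_rfl
  -- measurability of f₀
  have hmeas : Measurable f₀ := by
    apply Measurable.mul
    apply Measurable.mul
    apply Measurable.mul
    · exact Finset.measurable_sum _ fun j _ => (hκm j).comp measurable_fst
    · exact hcd.measurable
    · exact (hcdd.measurable.neg).add ((hW'c.comp hu.continuous).measurable)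
    · exact Finset.measurable_prod _ fun j _ =>
        measurable_const.add ((measurable_const.mul measurable_snd).mul
          ((hκm j).comp measurable_fst))
  -- boundedness of f₀ on Q ×ˢ Ioo
  have hbnd : Bornology.IsBounded (Q ×ˢ Set.Ioo (-ℓ) ℓ) :=
    hQb.prod (Metric.isBounded_Ioo _ _)
  have hfin : volume (Q ×ˢ Set.Ioo (-ℓ) ℓ) ≠ ⊤ := hbnd.measure_lt_top.ne
  have hKcpt : IsCompact (closure (Q ×ˢ Set.Ioo (-ℓ) ℓ)) := hbnd.isCompact_closure
  have hccont : Continuous (fun x : (Fin (n - 1) → ℝ) × ℝ =>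
      |pdz u x| * (|pdz (fun y => pdz u y) x| + |deriv W (u x)|)) :=
    hcd.abs.mul (hcdd.abs.add ((hW'c.comp hu.continuous).abs))
  obtain ⟨M₁, hM₁⟩ := hKcpt.exists_bound_of_continuousOn hccont.continuousOn
  set M : ℝ := max M₁ 0 with hM_def
  have hMnn : 0 ≤ M := le_max_right _ _
  have hM : ∀ x ∈ closure (Q ×ˢ Set.Ioo (-ℓ) ℓ),
      ‖|pdz u x| * (|pdz (fun y => pdz u y) x| + |deriv W (u x)|)‖ ≤ M :=
    fun x hx => (hM₁ x hx).trans (le_max_left _ _)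
  have hptbnd : ∀ x ∈ Q ×ˢ Set.Ioo (-ℓ) ℓ, ‖f₀ x‖ ≤ ((n - 1 : ℕ) : ℝ) * κ₀ * M * 2 ^ (n - 1) := by
    rintro ⟨s, z⟩ ⟨hs, hz⟩
    have hHb : |∑ j, κ j s| ≤ ((n - 1 : ℕ) : ℝ) * κ₀ := by
      calc |∑ j, κ j s| ≤ ∑ j, |κ j s| := Finset.abs_sum_le_sum_abs _ _
        _ ≤ ∑ _j : Fin (n - 1), κ₀ := Finset.sum_le_sum fun j _ => hκb j s hs
        _ = ((n - 1 : ℕ) : ℝ) * κ₀ := by simp [Finset.sum_const, mul_comm]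
    have hzl : |z| ≤ ℓ := abs_le.2 ⟨hz.1.le, hz.2.le⟩
    have hPb : |∏ j, (1 + ε * z * κ j s)| ≤ 2 ^ (n - 1) := by
      rw [Finset.abs_prod]
      calc ∏ j, |1 + ε * z * κ j s| ≤ ∏ _j : Fin (n - 1), (2 : ℝ) := by
            apply Finset.prod_le_prod (fun j _ => abs_nonneg _)
            intro j _
            have h1 : |ε * z * κ j s| ≤ ε * ℓ * κ₀ := by
              rw [abs_mul, abs_mul, abs_of_pos hε0]
              gcongr
              exact hκb j s hs
            calc |1 + ε * z * κ j s| ≤ |(1 : ℝ)| + |ε * z * κ j s| := abs_add_le _ _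
              _ ≤ 1 + 1 / 2 := by rw [abs_one]; linarith
              _ ≤ 2 := by norm_num
        _ = 2 ^ (n - 1) := by simp
    have hMx : |pdz u (s, z)| * (|pdz (fun y => pdz u y) (s, z)| + |deriv W (u (s, z))|) ≤ M := by
      have h := hM (s, z) (subset_closure ⟨hs, hz⟩)
      rw [Real.norm_eq_abs] at h
      exact (le_abs_self _).trans h
    have hmid : |pdz u (s, z)| * |-(pdz (fun y => pdz u y) (s, z)) + deriv W (u (s, z))| ≤ M := by
      refine le_trans ?_ hMx
      apply mul_le_mul_of_nonneg_left _ (abs_nonneg _)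
      calc |-(pdz (fun y => pdz u y) (s, z)) + deriv W (u (s, z))|
          ≤ |-(pdz (fun y => pdz u y) (s, z))| + |deriv W (u (s, z))| := abs_add_le _ _
        _ = |pdz (fun y => pdz u y) (s, z)| + |deriv W (u (s, z))| := by rw [abs_neg]
    show ‖(∑ j, κ j s) * pdz u (s, z) * (-(pdz (fun y => pdz u y) (s, z)) + deriv W (u (s, z)))
        * (∏ j, (1 + ε * z * κ j s))‖ ≤ _
    rw [Real.norm_eq_abs, abs_mul, abs_mul, abs_mul]
    calc |∑ j, κ j s| * |pdz u (s, z)| * |-(pdz (fun y => pdz u y) (s, z)) + deriv W (u (s, z))|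
          * |∏ j, (1 + ε * z * κ j s)|
        ≤ (((n - 1 : ℕ) : ℝ) * κ₀) * M * 2 ^ (n - 1) := by
          rw [mul_assoc (|∑ j, κ j s|)]
          apply mul_le_mul (mul_le_mul hHb hmid (by positivity) (by positivity)) hPb
            (abs_nonneg _) (mul_nonneg (by positivity) hMnn)
      _ = ((n - 1 : ℕ) : ℝ) * κ₀ * M * 2 ^ (n - 1) := by ring
  have hf₀int : IntegrableOn f₀ (Q ×ˢ Set.Ioo (-ℓ) ℓ) volume := by
    apply Measure.integrableOn_of_bounded hfin hmeas.aestronglyMeasurable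
    exact ((ae_restrict_mem (hQm.prod measurableSet_Ioo)).mono fun x hx => hptbnd x hx)
  have hFacont : Continuous Fa :=
    ((continuous_const.mul (hcd.pow 2)).sub (hW.continuous.comp hu.continuous)).abs
  have hFaint : IntegrableOn Fa (Q ×ˢ Set.Ioo (-ℓ) ℓ) volume :=
    (hFacont.continuousOn.integrableOn_compact hKcpt).mono_set subset_closure
  -- Fubini
  have hf₀int' : Integrable f₀ ((volume.restrict Q).prod (volume.restrict (Set.Ioo (-ℓ) ℓ))) := by
    rw [Measure.prod_restrict]; exact hf₀int
  have hFaint' : Integrable Fa ((volume.restrict Q).prod (volume.restrict (Set.Ioo (-ℓ) ℓ))) := by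
    rw [Measure.prod_restrict]; exact hFaint
  have hsplit : (∫ x in Q ×ˢ Set.Ioo (-ℓ) ℓ, f₀ x)
      = ∫ s in Q, ∫ z in Set.Ioo (-ℓ) ℓ, f₀ (s, z) := setIntegral_prod f₀ hf₀int
  have hsplit2 : (∫ x in Q ×ˢ Set.Ioo (-ℓ) ℓ, Fa x)
      = ∫ s in Q, ∫ z in Set.Ioo (-ℓ) ℓ, Fa (s, z) := setIntegral_prod Fa hFaint
  have int1 : IntegrableOn (fun s => |ε⁻¹ * ∫ z in Set.Ioo (-ℓ) ℓ, f₀ (s, z)|) Q volume :=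
    (hf₀int'.integral_prod_left.const_mul ε⁻¹).abs
  have int2 : IntegrableOn (fun s => C₀ * ∫ z in Set.Ioo (-ℓ) ℓ, Fa (s, z)) Q volume :=
    hFaint'.integral_prod_left.const_mul C₀
  have hFnn : 0 ≤ ∫ x in Q ×ˢ Set.Ioo (-ℓ) ℓ, Fa x :=
    setIntegral_nonneg (hQm.prod measurableSet_Ioo) fun x _ => abs_nonneg _
  have main : |ε⁻¹ * ∫ x in Q ×ˢ Set.Ioo (-ℓ) ℓ, f₀ x|
      ≤ C₀ * ∫ x in Q ×ˢ Set.Ioo (-ℓ) ℓ, Fa x := by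
    rw [hsplit, hsplit2, ← integral_const_mul, ← integral_const_mul]
    calc |∫ s in Q, ε⁻¹ * ∫ z in Set.Ioo (-ℓ) ℓ, f₀ (s, z)|
        ≤ ∫ s in Q, |ε⁻¹ * ∫ z in Set.Ioo (-ℓ) ℓ, f₀ (s, z)| := by
          simpa only [Real.norm_eq_abs] using
            norm_integral_le_integral_norm (μ := volume.restrict Q)
              (fun s => ε⁻¹ * ∫ z in Set.Ioo (-ℓ) ℓ, f₀ (s, z))
      _ ≤ ∫ s in Q, C₀ * ∫ z in Set.Ioo (-ℓ) ℓ, Fa (s, z) := by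
          apply setIntegral_mono_on int1 int2 hQm
          intro s hs
          exact inner_bound hu hW hW0 hℓ hκ₀ hε0 hεb κ (fun j => hκb j s hs)
            (hbc s hs).1 (hbc s hs).2.1 (hbc s hs).2.2.1 (hbc s hs).2.2.2
  calc |ε⁻¹ * ∫ x in Q ×ˢ Set.Ioo (-ℓ) ℓ, f₀ x| ≤ C₀ * ∫ x in Q ×ˢ Set.Ioo (-ℓ) ℓ, Fa x := main
    _ ≤ (C₀ + 1) * ∫ x in Q ×ˢ Set.Ioo (-ℓ) ℓ, Fa x := by nlinarith
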